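/- Let M ⊆ ℝⁿ be nonempty and let (yᵏ)_{k∈ℕ} be a sequence in ℝⁿ that is Fejér* monotone with respect to M. Then for every ȳ in the closure of the convex hull of M, the real sequence (‖yᵏ − ȳ‖)_{k∈ℕ} converges (to some nonnegative limit). -/

import Mathlib

open Filter

private lemma ev_antitone_conv (f : ℕ → ℝ) (h0 : ∀ k, 0 ≤ f k) (N : ℕ)
    (hA : ∀ k ≥ N, f (k + 1) ≤ f k) :
    ∃ L : ℝ, 0 ≤ L ∧ Tendsto f atTop (nhds L) := by
  set g : ℕ → ℝ := fun k => f (k + N) with hg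
  have hant : Antitone g := by
    apply antitone_nat_of_succ_le
    intro m
    show f (m + 1 + N) ≤ f (m + N)
    have h : m + 1 + N = (m + N) + 1 := by omega
    rw [h]
    exact hA (m + N) (Nat.le_add_left N m)
  have hbdd : BddBelow (Set.range g) := ⟨0, by rintro _ ⟨k, rfl⟩; exact h0 _⟩
  refine ⟨⨅ i, g i, ?_, ?_⟩
  · exact le_ciInf fun i => h0 _
  · have := tendsto_atTop_ciInf hant hbdd
    exact (tendsto_add_atTop_iff_nat N).mp this

private lemma parallel_axis {E : Type*} [NormedAddCommGroup E] [InnerProductSpace ℝ E]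
    {ι : Type*} (t : Finset ι) (w : ι → ℝ) (z : ι → E)
    (hw : ∑ i ∈ t, w i = 1) (x : E) (hx : ∑ i ∈ t, w i • z i = x) (u : E) :
    ‖u - x‖ ^ 2 = ∑ i ∈ t, w i * ‖u - z i‖ ^ 2 - ∑ i ∈ t, w i * ‖x - z i‖ ^ 2 := by
  have expand : ∀ i, ‖u - z i‖ ^ 2
      = ‖u - x‖ ^ 2 + 2 * inner ℝ (u - x) (x - z i) + ‖x - z i‖ ^ 2 := by
    intro i
    have : u - z i = (u - x) + (x - z i) := by abel
    rw [this, @norm_add_sq_real]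
  have hzero : ∑ i ∈ t, w i • (x - z i) = (0 : E) := by
    have : ∑ i ∈ t, w i • (x - z i) = (∑ i ∈ t, w i) • x - ∑ i ∈ t, w i • z i := by
      rw [Finset.sum_smul]
      rw [← Finset.sum_sub_distrib]
      congr 1
      ext i
      rw [smul_sub]
    rw [this, hw, one_smul, hx, sub_self]
  have hinner : ∑ i ∈ t, w i * inner ℝ (u - x) (x - z i) = (0 : ℝ) := by
    have : ∑ i ∈ t, w i * inner ℝ (u - x) (x - z i)
        = inner ℝ (u - x) (∑ i ∈ t, w i • (x - z i)) := by
      rw [inner_sum]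
      congr 1
      ext i
      rw [real_inner_smul_right]
    rw [this, hzero, inner_zero_right]
  have : ∑ i ∈ t, w i * ‖u - z i‖ ^ 2
      = ‖u - x‖ ^ 2 + ∑ i ∈ t, w i * ‖x - z i‖ ^ 2 := by
    calc ∑ i ∈ t, w i * ‖u - z i‖ ^ 2
        = ∑ i ∈ t, (w i * ‖u - x‖ ^ 2 + 2 * (w i * inner ℝ (u - x) (x - z i))
            + w i * ‖x - z i‖ ^ 2) := by
          apply Finset.sum_congr rfl
          intro i _
          rw [expand i]; ring
      _ = (∑ i ∈ t, w i) * ‖u - x‖ ^ 2 + 2 * (∑ i ∈ t, w i * inner ℝ (u - x) (x - z i))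
            + ∑ i ∈ t, w i * ‖x - z i‖ ^ 2 := by
          rw [Finset.sum_add_distrib, Finset.sum_add_distrib, ← Finset.sum_mul,
            ← Finset.mul_sum]
      _ = ‖u - x‖ ^ 2 + ∑ i ∈ t, w i * ‖x - z i‖ ^ 2 := by
          rw [hw, hinner]; ring
  linarith

private lemma conv_on_hull {n : ℕ} (M : Set (EuclideanSpace ℝ (Fin n)))
    (y : ℕ → EuclideanSpace ℝ (Fin n))
    (hF : ∀ z ∈ M, ∃ L : ℝ, 0 ≤ L ∧ Tendsto (fun k => ‖y k - z‖) atTop (nhds L)) :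
    ∀ x ∈ convexHull ℝ M,
      ∃ L : ℝ, 0 ≤ L ∧ Tendsto (fun k => ‖y k - x‖) atTop (nhds L) := by
  intro x hx
  rw [convexHull_eq] at hx
  obtain ⟨ι, t, w, z, hw0, hw1, hzM, hcent⟩ := hx
  have hxsum : ∑ i ∈ t, w i • z i = x := by
    rw [← Finset.centerMass_eq_of_sum_1 t z hw1]; exact hcent
  -- choose limits
  have hLex : ∀ i : ι, ∃ L : ℝ, 0 ≤ L ∧
      (i ∈ t → Tendsto (fun k => ‖y k - z i‖) atTop (nhds L)) := by
    intro i
    by_cases hi : i ∈ t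
    · obtain ⟨L, hL0, hLt⟩ := hF (z i) (hzM i hi)
      exact ⟨L, hL0, fun _ => hLt⟩
    · exact ⟨0, le_refl _, fun h => absurd h hi⟩
  choose L hL0 hLt using hLex
  set C : ℝ := ∑ i ∈ t, w i * ‖x - z i‖ ^ 2 with hC
  have hsq : Tendsto (fun k => ‖y k - x‖ ^ 2) atTop
      (nhds (∑ i ∈ t, w i * (L i) ^ 2 - C)) := by
    have heq : ∀ k, ‖y k - x‖ ^ 2 = ∑ i ∈ t, w i * ‖y k - z i‖ ^ 2 - C :=
      fun k => parallel_axis t w z hw1 x hxsum (y k)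
    have hsum : Tendsto (fun k => ∑ i ∈ t, w i * ‖y k - z i‖ ^ 2) atTop
        (nhds (∑ i ∈ t, w i * (L i) ^ 2)) := by
      apply tendsto_finset_sum
      intro i hi
      exact (tendsto_const_nhds.mul (((hLt i hi).pow 2)))
    simp only [heq]
    exact hsum.sub tendsto_const_nhds
  have hnn : 0 ≤ ∑ i ∈ t, w i * (L i) ^ 2 - C :=
    ge_of_tendsto' hsq (fun k => sq_nonneg _)
  refine ⟨Real.sqrt (∑ i ∈ t, w i * (L i) ^ 2 - C), Real.sqrt_nonneg _, ?_⟩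
  have : Tendsto (fun k => Real.sqrt (‖y k - x‖ ^ 2)) atTop
      (nhds (Real.sqrt (∑ i ∈ t, w i * (L i) ^ 2 - C))) :=
    (Real.continuous_sqrt.continuousAt).tendsto.comp hsq
  simpa [Real.sqrt_sq (norm_nonneg _)] using this

theorem stmt_3 {n : ℕ} (M : Set (EuclideanSpace ℝ (Fin n))) (hM : M.Nonempty)
    (y : ℕ → EuclideanSpace ℝ (Fin n))
    (hF : ∀ z ∈ M, ∃ N : ℕ, ∀ k ≥ N, ‖y (k + 1) - z‖ ≤ ‖y k - z‖) :
    ∀ ybar ∈ closure (convexHull ℝ M),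
      ∃ L : ℝ, 0 ≤ L ∧ Tendsto (fun k => ‖y k - ybar‖) atTop (nhds L) := by
  have hF' : ∀ z ∈ M, ∃ L : ℝ, 0 ≤ L ∧ Tendsto (fun k => ‖y k - z‖) atTop (nhds L) := by
    intro z hz
    obtain ⟨N, hN⟩ := hF z hz
    exact ev_antitone_conv _ (fun k => norm_nonneg _) N hN
  have hull := conv_on_hull M y hF'
  intro ybar hybar
  -- the sequence is Cauchy
  have hC : CauchySeq (fun k => ‖y k - ybar‖) := by
    rw [Metric.cauchySeq_iff]
    intro ε hε
    obtain ⟨x, hxhull, hxd⟩ := Metric.mem_closure_iff.mp hybar (ε / 4) (by linarith)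
    obtain ⟨Lx, _, hLx⟩ := hull x hxhull
    have hbC : CauchySeq (fun k => ‖y k - x‖) := hLx.cauchySeq
    obtain ⟨N, hN⟩ := Metric.cauchySeq_iff.mp hbC (ε / 2) (by linarith)
    refine ⟨N, fun m hm l hl => ?_⟩
    have h1 : dist ‖y m - ybar‖ ‖y m - x‖ ≤ ε / 4 := by
      rw [Real.dist_eq]
      have := abs_norm_sub_norm_le (y m - ybar) (y m - x)
      have heq : y m - ybar - (y m - x) = x - ybar := by abel
      rw [heq] at this
      calc |‖y m - ybar‖ - ‖y m - x‖| ≤ ‖x - ybar‖ := this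
        _ ≤ ε / 4 := by
            rw [← dist_eq_norm]
            rw [dist_comm]
            exact le_of_lt hxd
    have h2 : dist ‖y l - ybar‖ ‖y l - x‖ ≤ ε / 4 := by
      rw [Real.dist_eq]
      have := abs_norm_sub_norm_le (y l - ybar) (y l - x)
      have heq : y l - ybar - (y l - x) = x - ybar := by abel
      rw [heq] at this
      calc |‖y l - ybar‖ - ‖y l - x‖| ≤ ‖x - ybar‖ := this
        _ ≤ ε / 4 := by
            rw [← dist_eq_norm, dist_comm]
            exact le_of_lt hxd
    have h3 : dist ‖y m - x‖ ‖y l - x‖ < ε / 2 := hN m hm l hl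
    calc dist ‖y m - ybar‖ ‖y l - ybar‖
        ≤ dist ‖y m - ybar‖ ‖y m - x‖ + dist ‖y m - x‖ ‖y l - x‖
            + dist ‖y l - x‖ ‖y l - ybar‖ := dist_triangle4 _ _ _ _
      _ < ε / 4 + ε / 2 + ε / 4 := by
          have h2' : dist ‖y l - x‖ ‖y l - ybar‖ ≤ ε / 4 := by rw [dist_comm]; exact h2
          linarith
      _ = ε := by ring
  obtain ⟨L, hL⟩ := cauchySeq_tendsto_of_complete hC
  exact ⟨L, ge_of_tendsto' hL (fun k => norm_nonneg _), hL⟩
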